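/- (Data-processing inequality for the trace distance under completely positive trace-nonincreasing maps, Lemma 2, finite-dimensional form.) Let n be a finite type and ι a finite index set. Let ρ, σ be Hermitian n×n complex matrices, and let K : ι → Matrix n n ℂ be a family of Kraus operators such that 1 − ∑_{i∈ι} Kᵢᴴ Kᵢ is positive semidefinite. Then the trace norm contracts under the induced map: ‖ ∑_{i∈ι} Kᵢ ρ Kᵢᴴ − ∑_{i∈ι} Kᵢ σ Kᵢᴴ ‖₁ ≤ ‖ ρ − σ ‖₁. -/

import Mathlib

open Matrix
open scoped ComplexOrder

variable {n : Type*} [Fintype n] [DecidableEq n]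

/-- The positive semidefinite square root of a positive semidefinite matrix, as defined in
the older Mathlib (removed since). -/
noncomputable def Matrix.PosSemidef.sqrt {A : Matrix n n ℂ} (hA : A.PosSemidef) : Matrix n n ℂ :=
  hA.1.eigenvectorUnitary.1 * diagonal ((↑) ∘ (√·) ∘ hA.1.eigenvalues) *
  (star hA.1.eigenvectorUnitary : Matrix n n ℂ)

/-- The trace norm of a complex matrix: `‖A‖₁ = Tr[√(Aᴴ A)]`, where `√` is the positive
semidefinite square root of the positive semidefinite matrix `Aᴴ A`. -/
noncomputable def traceNorm (A : Matrix n n ℂ) : ℝ :=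
  ((Matrix.posSemidef_conjTranspose_mul_self A : (Aᴴ * A).PosSemidef).sqrt.trace).re

namespace TNAux

set_option linter.unusedSectionVars false

variable {A : Matrix n n ℂ}

lemma cfc_mul (hA : A.IsHermitian) (f g : ℝ → ℝ) :
    hA.cfc f * hA.cfc g = hA.cfc (fun x => f x * g x) := by
  have hU : (star (hA.eigenvectorUnitary : Matrix n n ℂ)) *
      (hA.eigenvectorUnitary : Matrix n n ℂ) = 1 := Unitary.coe_star_mul_self _
  simp only [Matrix.IsHermitian.cfc, Unitary.conjStarAlgAut_apply, Unitary.coe_star]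
  rw [show ∀ (U D1 D2 V : Matrix n n ℂ), U * D1 * V * (U * D2 * V) = U * (D1 * (V * U) * D2) * V
    from fun _ _ _ _ => by noncomm_ring]
  rw [hU, mul_one, diagonal_mul_diagonal]
  have hd : (fun i => (RCLike.ofReal ∘ f ∘ hA.eigenvalues) i * (RCLike.ofReal ∘ g ∘ hA.eigenvalues) i)
      = (RCLike.ofReal ∘ (fun x => f x * g x) ∘ hA.eigenvalues : n → ℂ) := by
    funext i; simp
  rw [hd]

lemma cfc_add (hA : A.IsHermitian) (f g : ℝ → ℝ) :
    hA.cfc f + hA.cfc g = hA.cfc (fun x => f x + g x) := by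
  simp only [Matrix.IsHermitian.cfc, Unitary.conjStarAlgAut_apply, Unitary.coe_star]
  rw [← add_mul, ← mul_add, diagonal_add]
  have hd : (fun i => (RCLike.ofReal ∘ f ∘ hA.eigenvalues) i + (RCLike.ofReal ∘ g ∘ hA.eigenvalues) i)
      = (RCLike.ofReal ∘ (fun x => f x + g x) ∘ hA.eigenvalues : n → ℂ) := by
    funext i; simp
  rw [hd]

lemma cfc_sub (hA : A.IsHermitian) (f g : ℝ → ℝ) :
    hA.cfc f - hA.cfc g = hA.cfc (fun x => f x - g x) := by
  simp only [Matrix.IsHermitian.cfc, Unitary.conjStarAlgAut_apply, Unitary.coe_star]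
  rw [← sub_mul, ← mul_sub, diagonal_sub]
  have hd : (fun i => (RCLike.ofReal ∘ f ∘ hA.eigenvalues) i - (RCLike.ofReal ∘ g ∘ hA.eigenvalues) i)
      = (RCLike.ofReal ∘ (fun x => f x - g x) ∘ hA.eigenvalues : n → ℂ) := by
    funext i; simp
  rw [hd]

lemma cfc_one (hA : A.IsHermitian) : hA.cfc (fun _ => 1) = 1 := by
  have hU : (hA.eigenvectorUnitary : Matrix n n ℂ) *
      (star (hA.eigenvectorUnitary : Matrix n n ℂ)) = 1 := Unitary.coe_mul_star_self _
  simp only [Matrix.IsHermitian.cfc, Unitary.conjStarAlgAut_apply, Unitary.coe_star]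
  have h1 : diagonal (RCLike.ofReal ∘ (fun _ : ℝ => (1:ℝ)) ∘ hA.eigenvalues) = (1 : Matrix n n ℂ) := by
    rw [← diagonal_one]
    congr 1
  rw [h1, mul_one, hU]

lemma cfc_id (hA : A.IsHermitian) : hA.cfc (fun x => x) = A := by
  rw [Matrix.IsHermitian.cfc]
  exact hA.spectral_theorem.symm

lemma cfc_posSemidef (hA : A.IsHermitian) {f : ℝ → ℝ} (hf : ∀ x, 0 ≤ f x) :
    (hA.cfc f).PosSemidef := by
  rw [Matrix.IsHermitian.cfc, Unitary.conjStarAlgAut_apply, star_eq_conjTranspose]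
  exact (Matrix.PosSemidef.diagonal (fun i => by
    simpa using Complex.zero_le_real.mpr (hf _))).mul_mul_conjTranspose_same _

lemma cfc_isHermitian (hA : A.IsHermitian) (f : ℝ → ℝ) : (hA.cfc f).IsHermitian := by
  rw [Matrix.IsHermitian.cfc, Unitary.conjStarAlgAut_apply, star_eq_conjTranspose]
  exact isHermitian_mul_mul_conjTranspose _
    (isHermitian_diagonal_of_self_adjoint _ (funext fun i => by
      simp [Pi.star_def, Function.comp, Complex.conj_ofReal]))

lemma trace_psd_nonneg {P : Matrix n n ℂ} (hP : P.PosSemidef) : 0 ≤ P.trace := by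
  exact hP.trace_nonneg

lemma sqrt_eq_cfc {P : Matrix n n ℂ} (hP : P.PosSemidef) : hP.sqrt = hP.1.cfc Real.sqrt := by
  rw [Matrix.IsHermitian.cfc, Unitary.conjStarAlgAut_apply]
  rfl

lemma sqrt_mul_self {P : Matrix n n ℂ} (hP : P.PosSemidef) : hP.sqrt * hP.sqrt = P := by
  rw [sqrt_eq_cfc, cfc_mul]
  have h : hP.1.cfc (fun x => Real.sqrt x * Real.sqrt x) = hP.1.cfc (fun x => x) := by
    simp only [Matrix.IsHermitian.cfc]
    congr 2
    funext i
    simp [Real.mul_self_sqrt (hP.eigenvalues_nonneg i)]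
  rw [h, cfc_id]

lemma posSemidef_sqrt {P : Matrix n n ℂ} (hP : P.PosSemidef) : hP.sqrt.PosSemidef := by
  rw [sqrt_eq_cfc]
  exact cfc_posSemidef hP.1 (fun x => Real.sqrt_nonneg x)

open scoped MatrixOrder in
lemma eq_sqrt_of_sq_eq' {P : Matrix n n ℂ} (hP : P.PosSemidef) {B : Matrix n n ℂ}
    (hB : B.PosSemidef) (h : B ^ 2 = P) : B = hP.sqrt := by
  have e : cfcₙ Real.sqrt P = cfc Real.sqrt P := cfcₙ_eq_cfc (hf0 := by simp)
  rw [sqrt_eq_cfc, ← hP.1.cfc_eq, ← e, ← CFC.sqrt_eq_real_sqrt P hP.nonneg]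
  exact (CFC.sqrt_unique (by rw [← pow_two]; exact h) hB.nonneg).symm

lemma trace_mul_psd_nonneg {P Q : Matrix n n ℂ} (hP : P.PosSemidef) (hQ : Q.PosSemidef) :
    0 ≤ (P * Q).trace := by
  have h1 : P * Q = hP.sqrt * (hP.sqrt * Q) := by rw [← mul_assoc, sqrt_mul_self hP]
  have h2 : (hP.sqrt * (hP.sqrt * Q)).trace = (hP.sqrt * Q * hP.sqrt).trace := by
    rw [trace_mul_comm]
  rw [h1, h2]
  have : hP.sqrt * Q * hP.sqrt = hP.sqrt * Q * (hP.sqrt)ᴴ := by rw [(posSemidef_sqrt hP).1]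
  rw [this]
  exact trace_psd_nonneg (hQ.mul_mul_conjTranspose_same _)

lemma traceNorm_hermitian (hA : A.IsHermitian) :
    traceNorm A = ((hA.cfc (fun x => |x|)).trace).re := by
  have habs := cfc_posSemidef hA (f := fun x => |x|) (fun x => abs_nonneg x)
  have hsq : (hA.cfc fun x => |x|) ^ 2 = Aᴴ * A := by
    rw [pow_two, cfc_mul hA]
    have h1 : (fun x => |x| * |x|) = fun x : ℝ => x * x := funext fun x => abs_mul_abs_self x
    rw [h1, ← cfc_mul hA (fun x => x) (fun x => x), cfc_id hA, hA.eq]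
  have key : (posSemidef_conjTranspose_mul_self A : (Aᴴ * A).PosSemidef).sqrt = hA.cfc (fun x => |x|) :=
    (eq_sqrt_of_sq_eq' _ habs hsq).symm
  rw [traceNorm, key]

end TNAux

/-- Data-processing inequality for the trace distance under completely positive
trace-nonincreasing maps (Lemma 2, finite-dimensional form): if the Kraus family `K`
satisfies `1 − ∑ᵢ Kᵢᴴ Kᵢ ⪰ 0`, then
`‖∑ᵢ Kᵢ ρ Kᵢᴴ − ∑ᵢ Kᵢ σ Kᵢᴴ‖₁ ≤ ‖ρ − σ‖₁` for Hermitian `ρ, σ`. -/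
theorem traceNorm_cptni_apply_sub_le {ι : Type*} [Fintype ι]
    (ρ σ : Matrix n n ℂ) (hρ : ρ.IsHermitian) (hσ : σ.IsHermitian)
    (K : ι → Matrix n n ℂ)
    (hK : (1 - ∑ i, (K i)ᴴ * K i).PosSemidef) :
    traceNorm ((∑ i, K i * ρ * (K i)ᴴ) - ∑ i, K i * σ * (K i)ᴴ) ≤ traceNorm (ρ - σ) := by
  classical
  set A : Matrix n n ℂ := ρ - σ with hAdef
  have hA : A.IsHermitian := hρ.sub hσ
  have hPhi : (∑ i, K i * ρ * (K i)ᴴ) - ∑ i, K i * σ * (K i)ᴴ = ∑ i, K i * A * (K i)ᴴ := by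
    rw [← Finset.sum_sub_distrib]
    exact Finset.sum_congr rfl fun i _ => by rw [hAdef]; noncomm_ring
  rw [hPhi]
  set B : Matrix n n ℂ := ∑ i, K i * A * (K i)ᴴ with hBdef
  have hB : B.IsHermitian := by
    rw [Matrix.IsHermitian, hBdef, conjTranspose_sum]
    exact Finset.sum_congr rfl fun i _ => (isHermitian_mul_mul_conjTranspose (K i) hA).eq
  -- the sign function of B
  set sgn : ℝ → ℝ := fun x => if 0 ≤ x then 1 else -1 with hsgn
  have hsgn_mul : ∀ x : ℝ, sgn x * x = |x| := by
    intro x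
    by_cases h : 0 ≤ x
    · simp [hsgn, h, abs_of_nonneg h]
    · simp [hsgn, h, abs_of_neg (lt_of_not_ge h)]
  set S : Matrix n n ℂ := hB.cfc sgn with hS
  have hSB : S * B = hB.cfc (fun x => |x|) := by
    have h0 : hB.cfc sgn * hB.cfc (fun x => x) = hB.cfc (fun x => |x|) := by
      rw [TNAux.cfc_mul]
      exact congrArg hB.cfc (funext hsgn_mul)
    rw [TNAux.cfc_id hB] at h0
    exact h0
  have h1ms : ∀ x, 0 ≤ 1 - sgn x := by
    intro x; by_cases h : 0 ≤ x <;> simp [hsgn, h]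
  have h1ps : ∀ x, 0 ≤ 1 + sgn x := by
    intro x; by_cases h : 0 ≤ x <;> simp [hsgn, h]
  set C : Matrix n n ℂ := ∑ i, (K i)ᴴ * S * K i with hC
  have htr : (S * B).trace = (C * A).trace := by
    rw [hBdef, Finset.mul_sum, trace_sum, hC, Finset.sum_mul, trace_sum]
    refine Finset.sum_congr rfl fun i _ => ?_
    have h1 : S * (K i * A * (K i)ᴴ) = (S * K i * A) * (K i)ᴴ := by noncomm_ring
    have h2 : (K i)ᴴ * S * K i * A = (K i)ᴴ * (S * K i * A) := by noncomm_ring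
    rw [h1, h2, trace_mul_comm]
  have hsum : ∀ (M : Matrix n n ℂ), M.PosSemidef → (∑ i, (K i)ᴴ * M * K i).PosSemidef := by
    intro M hM
    exact Finset.sum_induction _ _ (fun a b ha hb => ha.add hb) Matrix.PosSemidef.zero
      (fun i _ => hM.conjTranspose_mul_mul_same (K i))
  have hmS : hB.cfc (fun x => 1 - sgn x) = 1 - S := by
    rw [hS, ← TNAux.cfc_sub hB (fun _ => 1) sgn, TNAux.cfc_one hB]
  have hpS : hB.cfc (fun x => 1 + sgn x) = 1 + S := by
    rw [hS, ← TNAux.cfc_add hB (fun _ => 1) sgn, TNAux.cfc_one hB]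
  have hC1 : ((1 : Matrix n n ℂ) - C).PosSemidef := by
    have e : (1 : Matrix n n ℂ) - C
        = (1 - ∑ i, (K i)ᴴ * K i) + ∑ i, (K i)ᴴ * (hB.cfc (fun x => 1 - sgn x)) * K i := by
      rw [hmS]
      have e2 : ∑ i, (K i)ᴴ * (1 - S) * K i = (∑ i, (K i)ᴴ * K i) - C := by
        rw [hC, ← Finset.sum_sub_distrib]
        exact Finset.sum_congr rfl fun i _ => by noncomm_ring
      rw [e2]; abel
    rw [e]
    exact hK.add (hsum _ (TNAux.cfc_posSemidef hB h1ms))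
  have hC2 : ((1 : Matrix n n ℂ) + C).PosSemidef := by
    have e : (1 : Matrix n n ℂ) + C
        = (1 - ∑ i, (K i)ᴴ * K i) + ∑ i, (K i)ᴴ * (hB.cfc (fun x => 1 + sgn x)) * K i := by
      rw [hpS]
      have e2 : ∑ i, (K i)ᴴ * (1 + S) * K i = (∑ i, (K i)ᴴ * K i) + C := by
        rw [hC, ← Finset.sum_add_distrib]
        exact Finset.sum_congr rfl fun i _ => by noncomm_ring
      rw [e2]; abel
    rw [e]
    exact hK.add (hsum _ (TNAux.cfc_posSemidef hB h1ps))
  -- positive and negative parts of A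
  set fp : ℝ → ℝ := fun x => max x 0 with hfp
  set fm : ℝ → ℝ := fun x => max (-x) 0 with hfm
  have hP := TNAux.cfc_posSemidef hA (f := fp) (fun x => le_max_right _ _)
  have hN := TNAux.cfc_posSemidef hA (f := fm) (fun x => le_max_right _ _)
  have hApn : A = hA.cfc fp - hA.cfc fm := by
    have h0 : hA.cfc (fun x => x) = hA.cfc (fun x => fp x - fm x) := by
      refine congrArg hA.cfc (funext fun x => ?_)
      rcases le_total 0 x with h | h
      · rw [hfp, hfm]
        simp only [max_eq_left h, max_eq_right (neg_nonpos.mpr h), sub_zero]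
      · rw [hfp, hfm]
        simp only [max_eq_right h, max_eq_left (neg_nonneg.mpr h), zero_sub, neg_neg]
    rw [TNAux.cfc_sub, ← h0, TNAux.cfc_id hA]
  have habs_split : (fun x : ℝ => |x|) = fun x => fp x + fm x := by
    funext x
    rcases le_total 0 x with h | h
    · rw [hfp, hfm, abs_of_nonneg h]
      simp [max_eq_left h, max_eq_right (neg_nonpos.mpr h)]
    · rw [hfp, hfm, abs_of_nonpos h]
      simp [max_eq_right h, max_eq_left (neg_nonneg.mpr h)]
  have hTA : traceNorm A = ((hA.cfc fp).trace).re + ((hA.cfc fm).trace).re := by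
    rw [TNAux.traceNorm_hermitian hA, habs_split, ← TNAux.cfc_add hA fp fm, trace_add,
      Complex.add_re]
  have hTB : traceNorm B = ((S * B).trace).re := by
    rw [TNAux.traceNorm_hermitian hB, ← hSB]
  -- key inequalities
  have key1 : 0 ≤ (((1 : Matrix n n ℂ) - C) * hA.cfc fp).trace :=
    TNAux.trace_mul_psd_nonneg hC1 hP
  have key2 : 0 ≤ (((1 : Matrix n n ℂ) + C) * hA.cfc fm).trace :=
    TNAux.trace_mul_psd_nonneg hC2 hN
  rw [sub_mul, one_mul, trace_sub] at key1
  rw [add_mul, one_mul, trace_add] at key2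
  have r1 : ((C * hA.cfc fp).trace).re ≤ ((hA.cfc fp).trace).re := by
    have := (Complex.le_def.mp key1).1
    rw [Complex.zero_re, Complex.sub_re] at this
    linarith
  have r2 : -(((C * hA.cfc fm).trace).re) ≤ ((hA.cfc fm).trace).re := by
    have := (Complex.le_def.mp key2).1
    rw [Complex.zero_re, Complex.add_re] at this
    linarith
  have hsplit : ((C * A).trace).re
      = ((C * hA.cfc fp).trace).re - ((C * hA.cfc fm).trace).re := by
    conv_lhs => rw [hApn]
    rw [mul_sub, trace_sub, Complex.sub_re]
  rw [hTB, htr, hTA, hsplit]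
  linarith
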